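/- Let t be an SL₂-tiling with associated functions p and q. Then for all integers b < c and v < w the Ptolemy relation t(b,v)·t(c,w) = t(b,w)·t(c,v) + p(b,c)·q(v,w) holds. -/

import Mathlib

/-- An `SL₂`-tiling: all entries are `≥ 1` and every adjacent `2×2` minor is `1`. -/
def IsSL2Tiling (t : ℤ → ℤ → ℤ) : Prop :=
  (∀ i j, 1 ≤ t i j) ∧
  (∀ i j, t i j * t (i+1) (j+1) - t i (j+1) * t (i+1) j = 1)

/-- The infinite frieze `p` associated to an `SL₂`-tiling. -/
def pFrieze (t : ℤ → ℤ → ℤ) (a d : ℤ) : ℤ := t a 0 * t d 1 - t a 1 * t d 0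

/-- The infinite frieze `q` associated to an `SL₂`-tiling. -/
def qFrieze (t : ℤ → ℤ → ℤ) (u x : ℤ) : ℤ := t 0 u * t 1 x - t 0 x * t 1 u

lemma tiling_ne {t : ℤ → ℤ → ℤ} (ht : IsSL2Tiling t) (i j : ℤ) : t i j ≠ 0 := by
  have := ht.1 i j; omega

/-- Three-term relation between adjacent rows. -/
lemma adjacent3 {t : ℤ → ℤ → ℤ} (ht : IsSL2Tiling t) (i j : ℤ) :
    (t i j + t i (j+2)) * t (i+1) (j+1) = (t (i+1) j + t (i+1) (j+2)) * t i (j+1) := by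
  have h1 := ht.2 i j
  have h2 := ht.2 i (j+1)
  have e : j + 1 + 1 = j + 2 := by ring
  rw [e] at h2
  linear_combination h1 - h2

/-- Three-term relation between row `i` and row `0`. -/
lemma three_to_zero {t : ℤ → ℤ → ℤ} (ht : IsSL2Tiling t) (j : ℤ) : ∀ i : ℤ,
    (t i j + t i (j+2)) * t 0 (j+1) = (t 0 j + t 0 (j+2)) * t i (j+1) := by
  intro i
  induction i using Int.induction_on with
  | zero => ring
  | succ i ih =>
      have hadj := adjacent3 ht (i : ℤ) j
      have hB := tiling_ne ht (i : ℤ) (j+1)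
      apply mul_right_cancel₀ hB
      linear_combination (- t 0 (j+1)) * hadj + t ((i:ℤ)+1) (j+1) * ih
  | pred i ih =>
      have hadj := adjacent3 ht (-(i : ℤ) - 1) j
      have e : -(i:ℤ) - 1 + 1 = -(i:ℤ) := by ring
      rw [e] at hadj
      have hB := tiling_ne ht (-(i : ℤ)) (j+1)
      apply mul_right_cancel₀ hB
      linear_combination t 0 (j+1) * hadj + t (-(i:ℤ) - 1) (j+1) * ih

/-- Three-term relation between any two rows. -/
lemma three_gen {t : ℤ → ℤ → ℤ} (ht : IsSL2Tiling t) (r s j : ℤ) :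
    (t r j + t r (j+2)) * t s (j+1) = (t s j + t s (j+2)) * t r (j+1) := by
  have hr := three_to_zero ht j r
  have hs := three_to_zero ht j s
  have hB := tiling_ne ht 0 (j+1)
  apply mul_right_cancel₀ hB
  linear_combination t s (j+1) * hr - t r (j+1) * hs

/-- One step of constancy of the adjacent-column minor. -/
lemma mstep {t : ℤ → ℤ → ℤ} (ht : IsSL2Tiling t) (r s j : ℤ) :
    t r j * t s (j+1) - t r (j+1) * t s j
      = t r (j+1) * t s (j+2) - t r (j+2) * t s (j+1) := by
  linear_combination three_gen ht r s j

/-- The adjacent-column `2×2` minor on rows `r, s` is independent of the column. -/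
lemma mconst {t : ℤ → ℤ → ℤ} (ht : IsSL2Tiling t) (r s : ℤ) : ∀ j : ℤ,
    t r j * t s (j+1) - t r (j+1) * t s j = t r 0 * t s 1 - t r 1 * t s 0 := by
  intro j
  induction j using Int.induction_on with
  | zero => norm_num
  | succ j ih =>
      have h := mstep ht r s (j : ℤ)
      have e : (j : ℤ) + 1 + 1 = (j : ℤ) + 2 := by ring
      rw [e]
      linear_combination ih - h
  | pred j ih =>
      have h := mstep ht r s (-(j : ℤ) - 1)
      have e1 : -(j:ℤ) - 1 + 1 = -(j:ℤ) := by ring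
      have e2 : -(j:ℤ) - 1 + 2 = -(j:ℤ) + 1 := by ring
      rw [e1, e2] at h
      rw [e1]
      linear_combination ih + h

/-- Every row is the fixed linear combination of rows `0` and `1`. -/
lemma lin {t : ℤ → ℤ → ℤ} (ht : IsSL2Tiling t) (i j : ℤ) :
    t i j = pFrieze t i 1 * t 0 j + pFrieze t 0 i * t 1 j := by
  have h1 := mconst ht i 1 j
  have h2 := mconst ht 0 i j
  have h3 := ht.2 0 j
  norm_num at h3
  simp only [pFrieze]
  linear_combination t 0 j * h1 + t 1 j * h2 - t i j * h3

theorem ptolemy_t (t : ℤ → ℤ → ℤ) (ht : IsSL2Tiling t)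
    (b c v w : ℤ) (hbc : b < c) (hvw : v < w) :
    t b v * t c w = t b w * t c v + pFrieze t b c * qFrieze t v w := by
  have h3 : t 0 0 * t 1 1 - t 0 1 * t 1 0 = 1 := by
    have := ht.2 0 0
    norm_num at this
    exact this
  have hp : pFrieze t b c
      = pFrieze t b 1 * pFrieze t 0 c - pFrieze t c 1 * pFrieze t 0 b := by
    conv_lhs => rw [pFrieze, lin ht b 0, lin ht b 1, lin ht c 0, lin ht c 1]
    linear_combination (pFrieze t b 1 * pFrieze t 0 c - pFrieze t c 1 * pFrieze t 0 b) * h3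
  rw [hp, qFrieze, lin ht b v, lin ht b w, lin ht c v, lin ht c w]
  ring
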